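/- Define the dual projection on finite measures on $[0,M]^d$ by $P_j^*(\mu) = \sum_k (\phi_k^j, \mu)\,\delta_{x_k^j}$, using the hat-function partition of unity $\{\phi_k^j\}$ on the lattice $x_k^j = \frac{M}{j}k$. Then for probability measures $\mu^1,\mu^2$: $\|P_j^*\mu^1 - P_j^*\mu^2\|_{bLip^*} \le 2^{d+1} d\, \|\mu^1 - \mu^2\|_{bLip^*}$, where $\|\eta\|_{bLip^*} = \sup\{|(f,\eta)| : \|f\|_{bLip} \le 1\}$. -/

import Mathlib

open MeasureTheory

/-- The bounded-Lipschitz dual norm distance `‖μ - η‖_{bLip*}`: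
the supremum of `|(f,μ) - (f,η)|` over functions with `‖f‖_∞ + ‖f‖_{Lip} ≤ 1`,
the Lipschitz constant being taken with respect to the `ℓ¹` norm. -/
noncomputable def dBL (d : ℕ) (μ η : Measure (Fin d → ℝ)) : ℝ :=
  ⨆ f : {f : (Fin d → ℝ) → ℝ //
      ∃ C L : ℝ, 0 ≤ C ∧ 0 ≤ L ∧ C + L ≤ 1 ∧ (∀ x, |f x| ≤ C) ∧
        ∀ x y, |f x - f y| ≤ L * ∑ i, |x i - y i|},
    |(∫ x, f.1 x ∂μ) - ∫ x, f.1 x ∂η|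

/-- The dual hat-function projection `P_j^* μ = ∑_k (φ_k^j, μ) δ_{x_k^j}` on the
lattice `x_k^j = (M/j) k` in `[0,M]^d`. -/
noncomputable def dualProj (d j : ℕ) (M : ℝ)
    (φ : (Fin d → Fin (j + 1)) → (Fin d → ℝ) → ℝ)
    (μ : Measure (Fin d → ℝ)) : Measure (Fin d → ℝ) :=
  ∑ k : Fin d → Fin (j + 1),
    ENNReal.ofReal (∫ x, φ k x ∂μ) • Measure.dirac (fun i => (k i : ℝ) * (M / j))


open Finset


section hat

variable {χ : ℝ → ℝ}

lemma chi_nonneg (hχ : ∀ t, χ t = max (1 - |t|) 0) (t : ℝ) : 0 ≤ χ t := by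
  rw [hχ]; exact le_max_right _ _

lemma chi_le_one (hχ : ∀ t, χ t = max (1 - |t|) 0) (t : ℝ) : χ t ≤ 1 := by
  rw [hχ]; have := abs_nonneg t; apply max_le <;> linarith

lemma chi_eq_of_abs_le (hχ : ∀ t, χ t = max (1 - |t|) 0) {t : ℝ} (h : |t| ≤ 1) :
    χ t = 1 - |t| := by rw [hχ]; exact max_eq_left (by linarith)

lemma chi_eq_zero (hχ : ∀ t, χ t = max (1 - |t|) 0) {t : ℝ} (h : 1 ≤ |t|) :
    χ t = 0 := by rw [hχ]; exact max_eq_right (by linarith)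

lemma chi_sum_le_one (hχ : ∀ t, χ t = max (1 - |t|) 0) (N : ℕ) (r : ℝ) :
    ∑ n : Fin (N + 1), χ (r - (n : ℕ)) ≤ 1 := by
  set m : ℤ := ⌊r⌋ with hm
  have hm1 : (m : ℝ) ≤ r := Int.floor_le r
  have hm2 : r < m + 1 := Int.lt_floor_add_one r
  have hzero : ∀ n : Fin (N + 1), ¬(((n : ℕ) : ℤ) = m ∨ ((n : ℕ) : ℤ) = m + 1) →
      χ (r - (n : ℕ)) = 0 := by
    intro n hn
    push_neg at hn
    apply chi_eq_zero hχ
    rcases lt_or_gt_of_ne hn.1 with h | h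
    · have : ((n : ℕ) : ℝ) ≤ (m : ℝ) - 1 := by
        have : ((n : ℕ) : ℤ) ≤ m - 1 := by omega
        exact_mod_cast this
      rw [abs_of_nonneg (by linarith)]; linarith
    · have h2 : ((n : ℕ) : ℤ) ≠ m + 1 := hn.2
      have : ((m : ℝ) + 2) ≤ ((n : ℕ) : ℝ) := by
        have : m + 2 ≤ ((n : ℕ) : ℤ) := by omega
        exact_mod_cast this
      rw [abs_of_nonpos (by linarith)]; linarith
  classical
  have hsplit : ∑ n : Fin (N + 1), χ (r - (n : ℕ)) =
      ∑ n ∈ univ.filter (fun n : Fin (N + 1) =>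
        ((n : ℕ) : ℤ) = m ∨ ((n : ℕ) : ℤ) = m + 1), χ (r - (n : ℕ)) := by
    refine (Finset.sum_filter_of_ne ?_).symm
    intro n _ hne
    by_contra hc
    exact hne (hzero n hc)
  rw [hsplit, Finset.filter_or]
  have hdisj : Disjoint (univ.filter (fun n : Fin (N + 1) => ((n : ℕ) : ℤ) = m))
      (univ.filter (fun n : Fin (N + 1) => ((n : ℕ) : ℤ) = m + 1)) := by
    rw [Finset.disjoint_filter]
    intro n _ h1 h2
    omega
  rw [Finset.sum_union hdisj]
  have hcard : ∀ (z : ℤ), (univ.filter (fun n : Fin (N + 1) => ((n : ℕ) : ℤ) = z)).card ≤ 1 := by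
    intro z
    apply Finset.card_le_one.mpr
    intro a ha b hb
    simp only [Finset.mem_filter] at ha hb
    have : ((a : ℕ) : ℤ) = ((b : ℕ) : ℤ) := by rw [ha.2, hb.2]
    exact Fin.ext (by exact_mod_cast this)
  have hv1 : ∀ n ∈ univ.filter (fun n : Fin (N + 1) => ((n : ℕ) : ℤ) = m),
      χ (r - (n : ℕ)) ≤ 1 - (r - m) := by
    intro n hn
    simp only [Finset.mem_filter] at hn
    have hc : ((n : ℕ) : ℝ) = (m : ℝ) := by exact_mod_cast hn.2
    rw [hc, chi_eq_of_abs_le hχ (by rw [abs_of_nonneg (by linarith)]; linarith),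
      abs_of_nonneg (by linarith)]
  have hv2 : ∀ n ∈ univ.filter (fun n : Fin (N + 1) => ((n : ℕ) : ℤ) = m + 1),
      χ (r - (n : ℕ)) ≤ r - m := by
    intro n hn
    simp only [Finset.mem_filter] at hn
    have hc : ((n : ℕ) : ℝ) = (m : ℝ) + 1 := by exact_mod_cast hn.2
    rw [hc, chi_eq_of_abs_le hχ (by rw [abs_of_nonpos (by linarith)]; linarith),
      abs_of_nonpos (by linarith)]
    linarith
  have b1 := Finset.sum_le_card_nsmul _ _ _ hv1
  have b2 := Finset.sum_le_card_nsmul _ _ _ hv2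
  have c1 := hcard m
  have c2 := hcard (m + 1)
  have key : ∀ (c : ℕ) (v : ℝ), c ≤ 1 → 0 ≤ v → c • v ≤ v := by
    intro c v hc hv
    interval_cases c <;> simp [hv]
  have e1 := key _ _ c1 (by linarith : (0:ℝ) ≤ 1 - (r - m))
  have e2 := key _ _ c2 (by linarith : (0:ℝ) ≤ r - m)
  linarith

noncomputable def nodePt (d j : ℕ) (M : ℝ) (k : Fin d → Fin (j + 1)) : Fin d → ℝ :=
  fun i => (k i : ℝ) * (M / j)

noncomputable def hatFn (d j : ℕ) (M : ℝ) (χ : ℝ → ℝ) (k : Fin d → Fin (j + 1))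
    (x : Fin d → ℝ) : ℝ :=
  ∏ i, χ ((j / M) * x i - ((k i : ℕ) : ℝ))

noncomputable def Pj (d j : ℕ) (M : ℝ) (χ : ℝ → ℝ) (f : (Fin d → ℝ) → ℝ)
    (x : Fin d → ℝ) : ℝ :=
  ∑ k : Fin d → Fin (j + 1), f (nodePt d j M k) * hatFn d j M χ k x

lemma hatFn_nonneg (hχ : ∀ t, χ t = max (1 - |t|) 0) (d j : ℕ) (M : ℝ)
    (k : Fin d → Fin (j + 1)) (x : Fin d → ℝ) : 0 ≤ hatFn d j M χ k x :=
  Finset.prod_nonneg fun i _ => chi_nonneg hχ _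

lemma hatFn_sum_le_one (hχ : ∀ t, χ t = max (1 - |t|) 0) (d j : ℕ) (M : ℝ)
    (x : Fin d → ℝ) : ∑ k : Fin d → Fin (j + 1), hatFn d j M χ k x ≤ 1 := by
  classical
  have := (Fintype.prod_sum (fun (i : Fin d) (n : Fin (j + 1)) =>
    χ ((j / M) * x i - ((n : ℕ) : ℝ)))).symm
  unfold hatFn
  rw [this]
  apply Finset.prod_le_one
  · intro i _
    exact Finset.sum_nonneg fun n _ => chi_nonneg hχ _
  · intro i _
    exact chi_sum_le_one hχ j _

lemma hatFn_le_one (hχ : ∀ t, χ t = max (1 - |t|) 0) (d j : ℕ) (M : ℝ)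
    (k : Fin d → Fin (j + 1)) (x : Fin d → ℝ) : hatFn d j M χ k x ≤ 1 := by
  classical
  calc hatFn d j M χ k x ≤ ∑ k' : Fin d → Fin (j + 1), hatFn d j M χ k' x :=
        Finset.single_le_sum (fun k' _ => hatFn_nonneg hχ d j M k' x) (Finset.mem_univ k)
    _ ≤ 1 := hatFn_sum_le_one hχ d j M x

/-- restricted partition sum: the sum over `k` with `k i = m` of the off-`i` products
is at most 1. -/
lemma w_sum_le_one (hχ : ∀ t, χ t = max (1 - |t|) 0) (d j : ℕ) (M : ℝ)
    (i : Fin d) (m : Fin (j + 1)) (x : Fin d → ℝ) :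
    ∑ k ∈ Finset.univ.filter (fun k : Fin d → Fin (j + 1) => k i = m),
      ∏ l ∈ Finset.univ.erase i, χ ((j / M) * x l - ((k l : ℕ) : ℝ)) ≤ 1 := by
  classical
  set g : Fin d → Fin (j + 1) → ℝ := fun l n =>
    if l = i then (if n = m then 1 else 0) else χ ((j / M) * x l - ((n : ℕ) : ℝ)) with hg
  have hswap : ∑ k ∈ Finset.univ.filter (fun k : Fin d → Fin (j + 1) => k i = m),
      ∏ l ∈ Finset.univ.erase i, χ ((j / M) * x l - ((k l : ℕ) : ℝ))
      = ∑ k : Fin d → Fin (j + 1), ∏ l, g l (k l) := by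
    rw [Finset.sum_filter]
    apply Finset.sum_congr rfl
    intro k _
    have hprod : ∏ l, g l (k l)
        = g i (k i) * ∏ l ∈ Finset.univ.erase i, g l (k l) :=
      (Finset.mul_prod_erase Finset.univ (fun l => g l (k l)) (Finset.mem_univ i)).symm
    have herase : ∏ l ∈ Finset.univ.erase i, g l (k l)
        = ∏ l ∈ Finset.univ.erase i, χ ((j / M) * x l - ((k l : ℕ) : ℝ)) := by
      apply Finset.prod_congr rfl
      intro l hl
      simp [hg, Finset.ne_of_mem_erase hl]
    by_cases hk : k i = m
    · rw [hprod, herase]; simp [hk, hg]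
    · rw [hprod]; simp [hk, hg]
  rw [hswap, ← Fintype.prod_sum]
  apply Finset.prod_le_one
  · intro l _
    apply Finset.sum_nonneg
    intro n _
    by_cases hl : l = i
    · simp only [hg, if_pos hl]
      split_ifs <;> norm_num
    · simp only [hg, if_neg hl]
      exact chi_nonneg hχ _
  · intro l _
    by_cases hl : l = i
    · simp [hg, hl]
    · simp only [hg, if_neg hl]
      exact chi_sum_le_one hχ j _

lemma Pj_bound (hχ : ∀ t, χ t = max (1 - |t|) 0) (d j : ℕ) (M : ℝ)
    {f : (Fin d → ℝ) → ℝ} {C : ℝ} (hC : 0 ≤ C) (hfC : ∀ x, |f x| ≤ C)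
    (x : Fin d → ℝ) : |Pj d j M χ f x| ≤ C := by
  classical
  calc |Pj d j M χ f x| ≤ ∑ k : Fin d → Fin (j + 1), |f (nodePt d j M k) * hatFn d j M χ k x| :=
        Finset.abs_sum_le_sum_abs _ _
    _ ≤ ∑ k : Fin d → Fin (j + 1), C * hatFn d j M χ k x := by
        apply Finset.sum_le_sum
        intro k _
        rw [abs_mul, abs_of_nonneg (hatFn_nonneg hχ d j M k x)]
        exact mul_le_mul_of_nonneg_right (hfC _) (hatFn_nonneg hχ d j M k x)
    _ = C * ∑ k : Fin d → Fin (j + 1), hatFn d j M χ k x := by rw [Finset.mul_sum]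
    _ ≤ C * 1 := mul_le_mul_of_nonneg_left (hatFn_sum_le_one hχ d j M x) hC
    _ = C := mul_one C

noncomputable def wFn (d j : ℕ) (M : ℝ) (χ : ℝ → ℝ) (i : Fin d) (x : Fin d → ℝ)
    (k : Fin d → Fin (j + 1)) : ℝ :=
  ∏ l ∈ Finset.univ.erase i, χ ((j / M) * x l - ((k l : ℕ) : ℝ))

lemma wFn_nonneg (hχ : ∀ t, χ t = max (1 - |t|) 0) (d j : ℕ) (M : ℝ) (i : Fin d)
    (x : Fin d → ℝ) (k : Fin d → Fin (j + 1)) : 0 ≤ wFn d j M χ i x k :=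
  Finset.prod_nonneg fun l _ => chi_nonneg hχ _

lemma wFn_update (d j : ℕ) (M : ℝ) (χ : ℝ → ℝ) (i : Fin d) (x : Fin d → ℝ)
    (k : Fin d → Fin (j + 1)) (a : Fin (j + 1)) :
    wFn d j M χ i x (Function.update k i a) = wFn d j M χ i x k := by
  unfold wFn
  apply Finset.prod_congr rfl
  intro l hl
  rw [Function.update_of_ne (Finset.ne_of_mem_erase hl)]

lemma wFn_sum_le_one (hχ : ∀ t, χ t = max (1 - |t|) 0) (d j : ℕ) (M : ℝ)
    (i : Fin d) (m : Fin (j + 1)) (x : Fin d → ℝ) :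
    ∑ k ∈ Finset.univ.filter (fun k : Fin d → Fin (j + 1) => k i = m),
      wFn d j M χ i x k ≤ 1 :=
  w_sum_le_one hχ d j M i m x

lemma hatFn_update (d j : ℕ) (M : ℝ) (χ : ℝ → ℝ) (i : Fin d) (x : Fin d → ℝ)
    (k : Fin d → Fin (j + 1)) (r : ℝ) :
    hatFn d j M χ k (Function.update x i r)
      = χ ((j / M) * r - ((k i : ℕ) : ℝ)) * wFn d j M χ i x k := by
  unfold hatFn wFn
  rw [← Finset.mul_prod_erase Finset.univ _ (Finset.mem_univ i)]
  congr 1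
  · rw [Function.update_self]
  · apply Finset.prod_congr rfl
    intro l hl
    rw [Function.update_of_ne (Finset.ne_of_mem_erase hl)]

lemma cell_lip (hχ : ∀ t, χ t = max (1 - |t|) 0) {d j : ℕ} {M : ℝ} (hj : 0 < j) (hM : 0 < M)
    {f : (Fin d → ℝ) → ℝ} {L : ℝ} (hL : 0 ≤ L)
    (hfL : ∀ x y, |f x - f y| ≤ L * ∑ i, |x i - y i|)
    (i : Fin d) (m : ℕ) (hm : m + 1 ≤ j) {s t : ℝ}
    (hs1 : (m : ℝ) * (M / j) ≤ s) (hs2 : s ≤ ((m : ℝ) + 1) * (M / j))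
    (ht1 : (m : ℝ) * (M / j) ≤ t) (ht2 : t ≤ ((m : ℝ) + 1) * (M / j))
    (x : Fin d → ℝ) :
    |Pj d j M χ f (Function.update x i s) - Pj d j M χ f (Function.update x i t)|
      ≤ L * |s - t| := by
  classical
  have hj' : (0 : ℝ) < j := by exact_mod_cast hj
  have hc : (0 : ℝ) < (j : ℝ) / M := div_pos hj' hM
  have hh : (0 : ℝ) < M / (j : ℝ) := div_pos hM hj'
  have hch : (j : ℝ) / M * (M / (j : ℝ)) = 1 := by field_simp
  have hmul : ∀ a : ℝ, (j : ℝ) / M * (a * (M / (j : ℝ))) = a := by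
    intro a
    rw [mul_comm ((j : ℝ) / M) _, mul_assoc, mul_comm (M / (j:ℝ)) _, hch, mul_one]
  have hcs1 : (m : ℝ) ≤ (j : ℝ) / M * s := by
    have := mul_le_mul_of_nonneg_left hs1 hc.le
    rwa [hmul] at this
  have hcs2 : (j : ℝ) / M * s ≤ (m : ℝ) + 1 := by
    have := mul_le_mul_of_nonneg_left hs2 hc.le
    rwa [hmul] at this
  have hct1 : (m : ℝ) ≤ (j : ℝ) / M * t := by
    have := mul_le_mul_of_nonneg_left ht1 hc.le
    rwa [hmul] at this
  have hct2 : (j : ℝ) / M * t ≤ (m : ℝ) + 1 := by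
    have := mul_le_mul_of_nonneg_left ht2 hc.le
    rwa [hmul] at this
  set m₀ : Fin (j + 1) := ⟨m, by omega⟩ with hm₀
  set m₁ : Fin (j + 1) := ⟨m + 1, by omega⟩ with hm₁
  have hne : m₁ ≠ m₀ := by simp [hm₀, hm₁, Fin.ext_iff]
  -- key pointwise identity for the chi differences
  have hkey : ∀ n : Fin (j + 1),
      χ ((j : ℝ) / M * s - ((n : ℕ) : ℝ)) - χ ((j : ℝ) / M * t - ((n : ℕ) : ℝ))
        = ((j : ℝ) / M * s - (j : ℝ) / M * t) *
            ((if n = m₁ then (1 : ℝ) else 0) - (if n = m₀ then (1 : ℝ) else 0)) := by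
    intro n
    by_cases h1 : n = m₁
    · have hn : ((n : ℕ) : ℝ) = (m : ℝ) + 1 := by rw [h1]; push_cast [hm₁]; ring
      have hne' : n ≠ m₀ := by rw [h1]; exact hne
      have es : χ ((j : ℝ) / M * s - ((n : ℕ) : ℝ)) = (j : ℝ) / M * s - (m : ℝ) := by
        rw [hn, chi_eq_of_abs_le hχ (by rw [abs_of_nonpos (by linarith)]; linarith),
          abs_of_nonpos (by linarith)]
        ring
      have et : χ ((j : ℝ) / M * t - ((n : ℕ) : ℝ)) = (j : ℝ) / M * t - (m : ℝ) := by
        rw [hn, chi_eq_of_abs_le hχ (by rw [abs_of_nonpos (by linarith)]; linarith),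
          abs_of_nonpos (by linarith)]
        ring
      rw [es, et, if_pos h1, if_neg hne']
      ring
    · by_cases h2 : n = m₀
      · have hn : ((n : ℕ) : ℝ) = (m : ℝ) := by rw [h2]
        have es : χ ((j : ℝ) / M * s - ((n : ℕ) : ℝ)) = 1 - ((j : ℝ) / M * s - (m : ℝ)) := by
          rw [hn, chi_eq_of_abs_le hχ (by rw [abs_of_nonneg (by linarith)]; linarith),
            abs_of_nonneg (by linarith)]
        have et : χ ((j : ℝ) / M * t - ((n : ℕ) : ℝ)) = 1 - ((j : ℝ) / M * t - (m : ℝ)) := by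
          rw [hn, chi_eq_of_abs_le hχ (by rw [abs_of_nonneg (by linarith)]; linarith),
            abs_of_nonneg (by linarith)]
        rw [es, et, if_neg h1, if_pos h2]
        ring
      · have hv1 : (n : ℕ) ≠ m + 1 := by
          intro hcon; exact h1 (by simp [hm₁, Fin.ext_iff, hcon])
        have hv2 : (n : ℕ) ≠ m := by
          intro hcon; exact h2 (by simp [hm₀, Fin.ext_iff, hcon])
        rcases Nat.lt_or_ge (n : ℕ) m with hlt | hge
        · have hn : ((n : ℕ) : ℝ) ≤ (m : ℝ) - 1 := by
            have h' : (n : ℕ) + 1 ≤ m := hlt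
            have := (Nat.cast_le (α := ℝ)).2 h'
            push_cast at this; linarith
          have es : χ ((j : ℝ) / M * s - ((n : ℕ) : ℝ)) = 0 :=
            chi_eq_zero hχ (by rw [abs_of_nonneg (by linarith)]; linarith)
          have et : χ ((j : ℝ) / M * t - ((n : ℕ) : ℝ)) = 0 :=
            chi_eq_zero hχ (by rw [abs_of_nonneg (by linarith)]; linarith)
          rw [es, et, if_neg h1, if_neg h2]
          ring
        · have hge2 : m + 2 ≤ (n : ℕ) := by omega
          have hn : (m : ℝ) + 2 ≤ ((n : ℕ) : ℝ) := by
            have := (Nat.cast_le (α := ℝ)).2 hge2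
            push_cast at this; linarith
          have es : χ ((j : ℝ) / M * s - ((n : ℕ) : ℝ)) = 0 :=
            chi_eq_zero hχ (by rw [abs_of_nonpos (by linarith)]; linarith)
          have et : χ ((j : ℝ) / M * t - ((n : ℕ) : ℝ)) = 0 :=
            chi_eq_zero hχ (by rw [abs_of_nonpos (by linarith)]; linarith)
          rw [es, et, if_neg h1, if_neg h2]
          ring
  -- main difference identity
  have hPdiff : Pj d j M χ f (Function.update x i s) - Pj d j M χ f (Function.update x i t)
      = ((j : ℝ) / M * s - (j : ℝ) / M * t) *
          ((∑ k ∈ Finset.univ.filter (fun k : Fin d → Fin (j + 1) => k i = m₁),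
              f (nodePt d j M k) * wFn d j M χ i x k)
            - ∑ k ∈ Finset.univ.filter (fun k : Fin d → Fin (j + 1) => k i = m₀),
              f (nodePt d j M k) * wFn d j M χ i x k) := by
    unfold Pj
    rw [← Finset.sum_sub_distrib]
    have hterm : ∀ k : Fin d → Fin (j + 1),
        f (nodePt d j M k) * hatFn d j M χ k (Function.update x i s)
          - f (nodePt d j M k) * hatFn d j M χ k (Function.update x i t)
        = ((j : ℝ) / M * s - (j : ℝ) / M * t) *
            ((if k i = m₁ then f (nodePt d j M k) * wFn d j M χ i x k else 0)
              - (if k i = m₀ then f (nodePt d j M k) * wFn d j M χ i x k else 0)) := by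
      intro k
      rw [hatFn_update, hatFn_update]
      have hfac : f (nodePt d j M k) * (χ ((j:ℝ) / M * s - ((k i : ℕ) : ℝ)) * wFn d j M χ i x k)
          - f (nodePt d j M k) * (χ ((j:ℝ) / M * t - ((k i : ℕ) : ℝ)) * wFn d j M χ i x k)
          = f (nodePt d j M k) * wFn d j M χ i x k *
            (χ ((j:ℝ) / M * s - ((k i : ℕ) : ℝ)) - χ ((j:ℝ) / M * t - ((k i : ℕ) : ℝ))) := by
        ring
      rw [hfac, hkey (k i)]
      by_cases h1 : k i = m₁
      · have h2 : ¬ k i = m₀ := by rw [h1]; exact hne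
        simp only [if_pos h1, if_neg h2]
        ring
      · by_cases h2 : k i = m₀
        · simp only [if_neg h1, if_pos h2]
          ring
        · simp only [if_neg h1, if_neg h2]
          ring
    rw [Finset.sum_congr rfl fun k _ => hterm k, ← Finset.mul_sum,
      Finset.sum_sub_distrib, ← Finset.sum_filter, ← Finset.sum_filter]
  -- reindex the m₁-sum by the m₀-sum
  have hbij : ∑ k ∈ Finset.univ.filter (fun k : Fin d → Fin (j + 1) => k i = m₁),
      f (nodePt d j M k) * wFn d j M χ i x k
      = ∑ k ∈ Finset.univ.filter (fun k : Fin d → Fin (j + 1) => k i = m₀),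
        f (nodePt d j M (Function.update k i m₁)) * wFn d j M χ i x k := by
    refine Finset.sum_bij' (fun k _ => Function.update k i m₀)
      (fun k _ => Function.update k i m₁) ?_ ?_ ?_ ?_ ?_
    · intro k hk
      simp [Function.update_self]
    · intro k hk
      simp [Function.update_self]
    · intro k hk
      simp only [Finset.mem_filter, Finset.mem_univ, true_and] at hk
      show Function.update (Function.update k i m₀) i m₁ = k
      rw [Function.update_idem, ← hk, Function.update_eq_self]
    · intro k hk
      simp only [Finset.mem_filter, Finset.mem_univ, true_and] at hk
      show Function.update (Function.update k i m₁) i m₀ = k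
      rw [Function.update_idem, ← hk, Function.update_eq_self]
    · intro k hk
      simp only [Finset.mem_filter, Finset.mem_univ, true_and] at hk
      show f (nodePt d j M k) * wFn d j M χ i x k
        = f (nodePt d j M (Function.update (Function.update k i m₀) i m₁)) *
            wFn d j M χ i x (Function.update k i m₀)
      rw [Function.update_idem, wFn_update, ← hk, Function.update_eq_self]
  rw [hbij, ← Finset.sum_sub_distrib] at hPdiff
  have hsum : ∀ k ∈ Finset.univ.filter (fun k : Fin d → Fin (j + 1) => k i = m₀),
      |f (nodePt d j M (Function.update k i m₁)) * wFn d j M χ i x k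
          - f (nodePt d j M k) * wFn d j M χ i x k|
        ≤ (L * (M / j)) * wFn d j M χ i x k := by
    intro k hk
    have hwk := wFn_nonneg hχ d j M i x k
    rw [← sub_mul, abs_mul, abs_of_nonneg hwk]
    apply mul_le_mul_of_nonneg_right _ hwk
    calc |f (nodePt d j M (Function.update k i m₁)) - f (nodePt d j M k)|
        ≤ L * ∑ l, |nodePt d j M (Function.update k i m₁) l - nodePt d j M k l| := hfL _ _
      _ = L * (M / j) := by
        congr 1
        rw [Finset.sum_eq_single_of_mem i (Finset.mem_univ i)]
        · simp only [Finset.mem_filter, Finset.mem_univ, true_and] at hk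
          unfold nodePt
          rw [Function.update_self, hk]
          have he : ((m₁ : ℕ) : ℝ) * (M / j) - ((m₀ : ℕ) : ℝ) * (M / j) = M / j := by
            simp only [hm₀, hm₁]
            push_cast
            ring
          rw [he, abs_of_pos hh]
        · intro l _ hl
          unfold nodePt
          rw [Function.update_of_ne hl, sub_self, abs_zero]
  have hT : |∑ k ∈ Finset.univ.filter (fun k : Fin d → Fin (j + 1) => k i = m₀),
      (f (nodePt d j M (Function.update k i m₁)) * wFn d j M χ i x k
        - f (nodePt d j M k) * wFn d j M χ i x k)|
      ≤ L * (M / j) := by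
    calc |∑ k ∈ Finset.univ.filter (fun k : Fin d → Fin (j + 1) => k i = m₀),
        (f (nodePt d j M (Function.update k i m₁)) * wFn d j M χ i x k
          - f (nodePt d j M k) * wFn d j M χ i x k)|
        ≤ ∑ k ∈ Finset.univ.filter (fun k : Fin d → Fin (j + 1) => k i = m₀),
          |f (nodePt d j M (Function.update k i m₁)) * wFn d j M χ i x k
            - f (nodePt d j M k) * wFn d j M χ i x k| :=
          Finset.abs_sum_le_sum_abs _ _
      _ ≤ ∑ k ∈ Finset.univ.filter (fun k : Fin d → Fin (j + 1) => k i = m₀),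
          (L * (M / j)) * wFn d j M χ i x k := Finset.sum_le_sum hsum
      _ = (L * (M / j)) * ∑ k ∈ Finset.univ.filter (fun k : Fin d → Fin (j + 1) => k i = m₀),
          wFn d j M χ i x k := by rw [Finset.mul_sum]
      _ ≤ (L * (M / j)) * 1 := by
          apply mul_le_mul_of_nonneg_left (wFn_sum_le_one hχ d j M i m₀ x)
          positivity
      _ = L * (M / j) := mul_one _
  rw [hPdiff, abs_mul]
  have habs : |(j : ℝ) / M * s - (j : ℝ) / M * t| = (j : ℝ) / M * |s - t| := by
    rw [← mul_sub, abs_mul, abs_of_pos hc]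
  rw [habs]
  calc (j : ℝ) / M * |s - t| *
      |∑ k ∈ Finset.univ.filter (fun k : Fin d → Fin (j + 1) => k i = m₀),
        (f (nodePt d j M (Function.update k i m₁)) * wFn d j M χ i x k
          - f (nodePt d j M k) * wFn d j M χ i x k)|
      ≤ (j : ℝ) / M * |s - t| * (L * (M / j)) := by
        apply mul_le_mul_of_nonneg_left hT
        positivity
    _ = L * |s - t| * ((j : ℝ) / M * (M / j)) := by ring
    _ = L * |s - t| := by rw [hch, mul_one]

lemma lip_coord (hχ : ∀ t, χ t = max (1 - |t|) 0) {d j : ℕ} {M : ℝ} (hj : 0 < j) (hM : 0 < M)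
    {f : (Fin d → ℝ) → ℝ} {L : ℝ} (hL : 0 ≤ L)
    (hfL : ∀ x y, |f x - f y| ≤ L * ∑ i, |x i - y i|)
    (i : Fin d) (x : Fin d → ℝ) {s t : ℝ}
    (hs : s ∈ Set.Icc (0 : ℝ) M) (ht : t ∈ Set.Icc (0 : ℝ) M) :
    |Pj d j M χ f (Function.update x i s) - Pj d j M χ f (Function.update x i t)|
      ≤ L * |s - t| := by
  have hj' : (0 : ℝ) < j := by exact_mod_cast hj
  have hh : (0 : ℝ) < M / j := div_pos hM hj'
  have hjM : (j : ℝ) * (M / j) = M := by field_simp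
  have key : ∀ n : ℕ, n ≤ j → ∀ s t : ℝ, 0 ≤ s → s ≤ t → t ≤ (n : ℝ) * (M / j) →
      |Pj d j M χ f (Function.update x i s) - Pj d j M χ f (Function.update x i t)|
        ≤ L * (t - s) := by
    intro n
    induction n with
    | zero =>
      intro _ s t h0 hst ht'
      have hts : s = t := le_antisymm hst (by norm_num at ht'; linarith)
      rw [hts, sub_self, abs_zero, sub_self, mul_zero]
    | succ n ih =>
      intro hn1 s t h0 hst ht'
      push_cast at ht'
      by_cases hcase : t ≤ (n : ℝ) * (M / j)
      · exact ih (by omega) s t h0 hst hcase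
      push_neg at hcase
      by_cases hs' : (n : ℝ) * (M / j) ≤ s
      · have := cell_lip hχ hj hM hL hfL i n hn1 hs' (by linarith) hcase.le (by linarith) x
        rwa [abs_of_nonpos (sub_nonpos.mpr hst), neg_sub] at this
      · push_neg at hs'
        have h1 := ih (by omega) s ((n : ℝ) * (M / j)) h0 hs'.le le_rfl
        have h2 := cell_lip hχ hj hM hL hfL i n hn1 le_rfl
          (by nlinarith) hcase.le (by linarith) x
        rw [abs_of_nonpos (sub_nonpos.mpr hcase.le), neg_sub] at h2
        calc |Pj d j M χ f (Function.update x i s) - Pj d j M χ f (Function.update x i t)|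
            ≤ |Pj d j M χ f (Function.update x i s)
                - Pj d j M χ f (Function.update x i ((n : ℝ) * (M / j)))|
              + |Pj d j M χ f (Function.update x i ((n : ℝ) * (M / j)))
                - Pj d j M χ f (Function.update x i t)| := abs_sub_le _ _ _
          _ ≤ L * ((n : ℝ) * (M / j) - s) + L * (t - (n : ℝ) * (M / j)) := add_le_add h1 h2
          _ = L * (t - s) := by ring
  rcases le_total s t with hst | hst
  · have := key j le_rfl s t hs.1 hst (by rw [hjM]; exact ht.2)
    rwa [abs_of_nonpos (sub_nonpos.mpr hst), neg_sub]
  · have := key j le_rfl t s ht.1 hst (by rw [hjM]; exact hs.2)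
    rw [abs_sub_comm (Pj d j M χ f (Function.update x i s)),
      abs_of_nonneg (sub_nonneg.mpr hst)]
    linarith

lemma Pj_lip (hχ : ∀ t, χ t = max (1 - |t|) 0) {d j : ℕ} {M : ℝ} (hj : 0 < j) (hM : 0 < M)
    {f : (Fin d → ℝ) → ℝ} {L : ℝ} (hL : 0 ≤ L)
    (hfL : ∀ x y, |f x - f y| ≤ L * ∑ i, |x i - y i|)
    {x y : Fin d → ℝ} (hx : ∀ i, x i ∈ Set.Icc (0 : ℝ) M) (hy : ∀ i, y i ∈ Set.Icc (0 : ℝ) M) :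
    |Pj d j M χ f x - Pj d j M χ f y| ≤ L * ∑ i, |x i - y i| := by
  classical
  set Z : ℕ → (Fin d → ℝ) := fun n l => if (l : ℕ) < n then y l else x l with hZ
  have hZ0 : Z 0 = x := by funext l; simp [hZ]
  have hZd : Z d = y := by funext l; simp [hZ, l.isLt]
  have htel := Finset.sum_range_sub' (fun n => Pj d j M χ f (Z n)) d
  rw [hZ0, hZd] at htel
  set F : ℕ → ℝ := fun n => if h : n < d then L * |x ⟨n, h⟩ - y ⟨n, h⟩| else 0 with hF
  calc |Pj d j M χ f x - Pj d j M χ f y|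
      = |∑ n ∈ Finset.range d, (Pj d j M χ f (Z n) - Pj d j M χ f (Z (n + 1)))| := by
        rw [htel]
    _ ≤ ∑ n ∈ Finset.range d, |Pj d j M χ f (Z n) - Pj d j M χ f (Z (n + 1))| :=
        Finset.abs_sum_le_sum_abs _ _
    _ ≤ ∑ n ∈ Finset.range d, F n := by
        apply Finset.sum_le_sum
        intro n hn
        have hn' : n < d := Finset.mem_range.mp hn
        set i : Fin d := ⟨n, hn'⟩ with hi
        have e1 : Function.update (Z n) i (x i) = Z n := by
          funext l
          by_cases hl : l = i
          · subst hl
            rw [Function.update_self]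
            simp [hZ, hi]
          · rw [Function.update_of_ne hl]
        have e2 : Function.update (Z n) i (y i) = Z (n + 1) := by
          funext l
          by_cases hl : l = i
          · subst hl
            rw [Function.update_self]
            simp [hZ, hi]
          · rw [Function.update_of_ne hl]
            have hln : (l : ℕ) ≠ n := by
              intro hc
              exact hl (Fin.ext (by simp [hi, hc]))
            simp only [hZ]
            by_cases h2 : (l : ℕ) < n
            · rw [if_pos h2, if_pos (by omega)]
            · rw [if_neg h2, if_neg (by omega)]
        have hb := lip_coord hχ hj hM hL hfL i (Z n) (hx i) (hy i)
        rw [e1, e2] at hb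
        rw [hF]
        simp only [dif_pos hn']
        exact hb
    _ = ∑ i : Fin d, L * |x i - y i| := by
        rw [← Fin.sum_univ_eq_sum_range F d]
        apply Finset.sum_congr rfl
        intro i _
        rw [hF]
        simp only [dif_pos i.isLt]
    _ = L * ∑ i, |x i - y i| := by rw [Finset.mul_sum]

lemma lip_continuous {d : ℕ} {f : (Fin d → ℝ) → ℝ} {L : ℝ} (hL : 0 ≤ L)
    (hfL : ∀ x y, |f x - f y| ≤ L * ∑ i, |x i - y i|) : Continuous f := by
  have hlip : LipschitzWith (Real.toNNReal (L * d)) f := by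
    apply LipschitzWith.of_dist_le_mul
    intro x y
    calc dist (f x) (f y) = |f x - f y| := Real.dist_eq _ _
      _ ≤ L * ∑ i, |x i - y i| := hfL x y
      _ ≤ L * ∑ _i : Fin d, dist x y := by
          apply mul_le_mul_of_nonneg_left _ hL
          apply Finset.sum_le_sum
          intro i _
          calc |x i - y i| = dist (x i) (y i) := (Real.dist_eq _ _).symm
            _ ≤ dist x y := dist_le_pi_dist x y i
      _ = (L * d) * dist x y := by
          rw [Finset.sum_const, Finset.card_univ, Fintype.card_fin, nsmul_eq_mul]
          ring
      _ = (Real.toNNReal (L * d) : ℝ) * dist x y := by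
          rw [Real.coe_toNNReal _ (by positivity)]
  exact hlip.continuous

lemma hatFn_continuous (hχc : Continuous χ) (d j : ℕ) (M : ℝ) (k : Fin d → Fin (j + 1)) :
    Continuous (hatFn d j M χ k) := by
  unfold hatFn
  apply continuous_finset_prod
  intro i _
  exact hχc.comp ((continuous_const.mul (continuous_apply i)).sub continuous_const)

lemma Pj_continuous (hχc : Continuous χ) (d j : ℕ) (M : ℝ) (f : (Fin d → ℝ) → ℝ) :
    Continuous (Pj d j M χ f) := by
  unfold Pj
  apply continuous_finset_sum
  intro k _
  exact continuous_const.mul (hatFn_continuous hχc d j M k)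

end hat

noncomputable def clampCube (d : ℕ) (M : ℝ) (x : Fin d → ℝ) : Fin d → ℝ :=
  fun i => max 0 (min (x i) M)

lemma clampCube_mem {d : ℕ} {M : ℝ} (hM : 0 ≤ M) (x : Fin d → ℝ) (i : Fin d) :
    clampCube d M x i ∈ Set.Icc (0 : ℝ) M := by
  constructor
  · exact le_max_left _ _
  · exact max_le hM (min_le_right _ _)

lemma clampCube_eq {d : ℕ} {M : ℝ} {x : Fin d → ℝ} (hx : ∀ i, x i ∈ Set.Icc (0 : ℝ) M) :
    clampCube d M x = x := by
  funext i
  unfold clampCube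
  rw [min_eq_left (hx i).2, max_eq_right (hx i).1]

lemma clampCube_continuous (d : ℕ) (M : ℝ) : Continuous (clampCube d M) := by
  apply continuous_pi
  intro i
  exact continuous_const.max ((continuous_apply i).min continuous_const)

lemma clamp_lip (M a b : ℝ) : |max 0 (min a M) - max 0 (min b M)| ≤ |a - b| := by
  have h1 := le_abs_self (a - b)
  have h2 := neg_abs_le (a - b)
  rw [abs_sub_le_iff]
  constructor <;> simp only [max_def, min_def] <;> split_ifs <;> linarith

lemma integrable_of_bound {d : ℕ} {μ : Measure (Fin d → ℝ)} [IsFiniteMeasure μ]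
    {g : (Fin d → ℝ) → ℝ} (hc : Continuous g) (C : ℝ) (hb : ∀ x, |g x| ≤ C) :
    Integrable g μ := by
  apply (integrable_const C).mono' hc.aestronglyMeasurable
  exact Filter.Eventually.of_forall fun x => by simpa using hb x

lemma integrable_dirac' {d : ℕ} {g : (Fin d → ℝ) → ℝ} (hc : Continuous g)
    (p : Fin d → ℝ) : Integrable g (Measure.dirac p) := by
  constructor
  · exact hc.aestronglyMeasurable
  · show (∫⁻ a, ‖g a‖₊ ∂(Measure.dirac p)) < ⊤
    rw [MeasureTheory.lintegral_dirac]
    exact ENNReal.coe_lt_top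

lemma integral_dualProj (d j : ℕ) (M : ℝ)
    (φ : (Fin d → Fin (j + 1)) → (Fin d → ℝ) → ℝ)
    (hφ0 : ∀ k x, 0 ≤ φ k x)
    (μ : Measure (Fin d → ℝ))
    (g : (Fin d → ℝ) → ℝ) (hg : Continuous g) :
    ∫ x, g x ∂(dualProj d j M φ μ)
      = ∑ k : Fin d → Fin (j + 1),
          (∫ x, φ k x ∂μ) * g (fun i => (k i : ℝ) * (M / j)) := by
  unfold dualProj
  rw [integral_finset_sum_measure (fun k _ =>
    (integrable_dirac' hg _).smul_measure ENNReal.ofReal_ne_top)]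
  apply Finset.sum_congr rfl
  intro k _
  rw [integral_smul_measure, integral_dirac,
    ENNReal.toReal_ofReal (integral_nonneg fun x => hφ0 k x), smul_eq_mul]

/-- `‖P_j^* μ1 - P_j^* μ2‖_{bLip*} ≤ 2^{d+1} d ‖μ1 - μ2‖_{bLip*}` for probability
measures `μ1, μ2` on `[0,M]^d`. -/
theorem stmt12
    (d j : ℕ) (hd : 0 < d) (hj : 0 < j) (M : ℝ) (hM : 0 < M)
    (χ : ℝ → ℝ) (hχ : ∀ t, χ t = max (1 - |t|) 0)
    (φ : (Fin d → Fin (j + 1)) → (Fin d → ℝ) → ℝ)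
    (hφ : ∀ k x, φ k x = ∏ i, χ ((j / M) * (x i - (k i : ℝ) * (M / j))))
    (μ1 μ2 : Measure (Fin d → ℝ))
    [IsProbabilityMeasure μ1] [IsProbabilityMeasure μ2]
    (hμ1 : μ1 {x | ¬ ∀ i, x i ∈ Set.Icc (0:ℝ) M} = 0)
    (hμ2 : μ2 {x | ¬ ∀ i, x i ∈ Set.Icc (0:ℝ) M} = 0) :
    dBL d (dualProj d j M φ μ1) (dualProj d j M φ μ2)
      ≤ 2 ^ (d + 1) * d * dBL d μ1 μ2 := by
  classical
  have hχc : Continuous χ := by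
    have he : χ = fun t => max (1 - |t|) 0 := funext hχ
    rw [he]
    exact (continuous_const.sub continuous_abs).max continuous_const
  have hjR : ((j : ℝ)) ≠ 0 := by positivity
  have hMne : M ≠ 0 := ne_of_gt hM
  have hφeq : ∀ k x, φ k x = hatFn d j M χ k x := by
    intro k x
    rw [hφ]
    unfold hatFn
    apply Finset.prod_congr rfl
    intro i _
    congr 1
    field_simp
  have hφ0 : ∀ k x, 0 ≤ φ k x := by
    intro k x
    rw [hφeq]
    exact hatFn_nonneg hχ d j M k x
  set D : ℝ := 2 ^ (d + 1) * (d : ℝ) with hD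
  have h2p : (1 : ℝ) ≤ 2 ^ (d + 1) := by
    calc (1 : ℝ) = 1 ^ (d + 1) := (one_pow _).symm
      _ ≤ 2 ^ (d + 1) := pow_le_pow_left₀ (by norm_num) (by norm_num) _
  have hd1 : (1 : ℝ) ≤ (d : ℝ) := by exact_mod_cast hd
  have hD1 : 1 ≤ D := by nlinarith
  have hD0 : (0 : ℝ) < D := lt_of_lt_of_le one_pos hD1
  -- nonemptiness of the index type
  haveI hne : Nonempty {f : (Fin d → ℝ) → ℝ //
      ∃ C L : ℝ, 0 ≤ C ∧ 0 ≤ L ∧ C + L ≤ 1 ∧ (∀ x, |f x| ≤ C) ∧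
        ∀ x y, |f x - f y| ≤ L * ∑ i, |x i - y i|} :=
    ⟨⟨fun _ => 0, 0, 0, le_rfl, le_rfl, by norm_num, fun x => by simp,
      fun x y => by simp⟩⟩
  -- boundedness of the dBL sup family
  have hbdd : BddAbove (Set.range fun (p : {f : (Fin d → ℝ) → ℝ //
      ∃ C L : ℝ, 0 ≤ C ∧ 0 ≤ L ∧ C + L ≤ 1 ∧ (∀ x, |f x| ≤ C) ∧
        ∀ x y, |f x - f y| ≤ L * ∑ i, |x i - y i|}) =>
      |(∫ x, p.1 x ∂μ1) - ∫ x, p.1 x ∂μ2|) := by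
    refine ⟨2, ?_⟩
    rintro v ⟨⟨f0, C0, L0, hC0, hL0, hCL0, hfC0, _⟩, rfl⟩
    have hb : ∀ (μ : Measure (Fin d → ℝ)), IsProbabilityMeasure μ →
        |∫ x, f0 x ∂μ| ≤ C0 := by
      intro μ hp
      by_cases hint : Integrable f0 μ
      · have hn := norm_integral_le_integral_norm (μ := μ) f0
        simp only [Real.norm_eq_abs] at hn
        calc |∫ x, f0 x ∂μ| ≤ ∫ x, |f0 x| ∂μ := hn
          _ ≤ ∫ _x, C0 ∂μ := integral_mono hint.abs (integrable_const C0) fun x => hfC0 x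
          _ = C0 := by simp
      · rw [integral_undef hint, abs_zero]
        exact hC0
    have h1 := hb μ1 inferInstance
    have h2 := hb μ2 inferInstance
    have hC01 : C0 ≤ 1 := by linarith
    show |(∫ x, f0 x ∂μ1) - ∫ x, f0 x ∂μ2| ≤ 2
    have htri : |(∫ x, f0 x ∂μ1) - ∫ x, f0 x ∂μ2|
        ≤ |∫ x, f0 x ∂μ1| + |∫ x, f0 x ∂μ2| := by
      have := abs_add_le (∫ x, f0 x ∂μ1) (-∫ x, f0 x ∂μ2)
      simpa [sub_eq_add_neg, abs_neg] using this
    linarith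
  rw [dBL]
  refine ciSup_le fun p => ?_
  obtain ⟨f, C, L, hC, hL, hCL, hfC, hfL⟩ := p
  simp only []
  have hfcont : Continuous f := lip_continuous hL hfL
  -- integrability of summands
  have hsummand : ∀ (μ : Measure (Fin d → ℝ)), IsProbabilityMeasure μ →
      ∀ k : Fin d → Fin (j + 1),
      Integrable (fun x => f (nodePt d j M k) * hatFn d j M χ k x) μ := by
    intro μ hp k
    apply Integrable.const_mul
    exact integrable_of_bound (hatFn_continuous hχc d j M k) 1
      fun x => by
        rw [abs_of_nonneg (hatFn_nonneg hχ d j M k x)]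
        exact hatFn_le_one hχ d j M k x
  -- the key integral identity
  have key : ∀ (μ : Measure (Fin d → ℝ)), IsProbabilityMeasure μ →
      μ {x | ¬ ∀ i, x i ∈ Set.Icc (0:ℝ) M} = 0 →
      ∫ x, f x ∂(dualProj d j M φ μ)
        = ∫ x, Pj d j M χ f (clampCube d M x) ∂μ := by
    intro μ hp hμ0
    rw [integral_dualProj d j M φ hφ0 μ f hfcont]
    have h1 : ∀ k : Fin d → Fin (j + 1),
        (∫ x, φ k x ∂μ) * f (fun i => (k i : ℝ) * (M / j))
        = ∫ x, f (nodePt d j M k) * hatFn d j M χ k x ∂μ := by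
      intro k
      rw [integral_const_mul]
      simp only [hφeq]
      rw [mul_comm]
      rfl
    rw [Finset.sum_congr rfl fun k _ => h1 k,
      ← integral_finset_sum _ (fun k _ => hsummand μ hp k)]
    have hPj : (fun x => ∑ k : Fin d → Fin (j + 1),
        f (nodePt d j M k) * hatFn d j M χ k x) = Pj d j M χ f := rfl
    rw [hPj]
    apply integral_congr_ae
    rw [Filter.EventuallyEq, ae_iff]
    apply measure_mono_null _ hμ0
    intro x hx
    simp only [Set.mem_setOf_eq] at hx ⊢
    intro hcon
    exact hx (by rw [clampCube_eq hcon])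
  rw [key μ1 inferInstance hμ1, key μ2 inferInstance hμ2]
  set g : (Fin d → ℝ) → ℝ := fun x => Pj d j M χ f (clampCube d M x) with hg
  have hgC : ∀ x, |g x| ≤ C := fun x => Pj_bound hχ d j M hC hfC _
  have hgL : ∀ x y, |g x - g y| ≤ L * ∑ i, |x i - y i| := by
    intro x y
    calc |g x - g y|
        ≤ L * ∑ i, |clampCube d M x i - clampCube d M y i| :=
          Pj_lip hχ hj hM hL hfL (clampCube_mem hM.le x) (clampCube_mem hM.le y)
      _ ≤ L * ∑ i, |x i - y i| := by
          apply mul_le_mul_of_nonneg_left _ hL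
          exact Finset.sum_le_sum fun i _ => clamp_lip M (x i) (y i)
  have hmem : ∃ C' L' : ℝ, 0 ≤ C' ∧ 0 ≤ L' ∧ C' + L' ≤ 1 ∧
      (∀ x, |D⁻¹ * g x| ≤ C') ∧
      ∀ x y, |D⁻¹ * g x - D⁻¹ * g y| ≤ L' * ∑ i, |x i - y i| := by
    refine ⟨D⁻¹ * C, D⁻¹ * L, by positivity, by positivity, ?_, ?_, ?_⟩
    · have he : D⁻¹ * C + D⁻¹ * L = D⁻¹ * (C + L) := by ring
      rw [he]
      calc D⁻¹ * (C + L) ≤ D⁻¹ * 1 :=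
            mul_le_mul_of_nonneg_left hCL (by positivity)
        _ ≤ 1 := by rw [mul_one]; exact inv_le_one_of_one_le₀ hD1
    · intro x
      rw [abs_mul, abs_of_nonneg (by positivity : (0:ℝ) ≤ D⁻¹)]
      exact mul_le_mul_of_nonneg_left (hgC x) (by positivity)
    · intro x y
      have he : D⁻¹ * g x - D⁻¹ * g y = D⁻¹ * (g x - g y) := by ring
      rw [he, abs_mul, abs_of_nonneg (by positivity : (0:ℝ) ≤ D⁻¹), mul_assoc]
      exact mul_le_mul_of_nonneg_left (hgL x y) (by positivity)
  have hle : |(∫ x, D⁻¹ * g x ∂μ1) - ∫ x, D⁻¹ * g x ∂μ2| ≤ dBL d μ1 μ2 := by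
    have := le_ciSup hbdd (⟨fun x => D⁻¹ * g x, hmem⟩ : {f : (Fin d → ℝ) → ℝ //
      ∃ C L : ℝ, 0 ≤ C ∧ 0 ≤ L ∧ C + L ≤ 1 ∧ (∀ x, |f x| ≤ C) ∧
        ∀ x y, |f x - f y| ≤ L * ∑ i, |x i - y i|})
    exact this
  rw [integral_const_mul, integral_const_mul] at hle
  have hfinal : |(∫ x, g x ∂μ1) - ∫ x, g x ∂μ2|
      = D * |D⁻¹ * (∫ x, g x ∂μ1) - D⁻¹ * (∫ x, g x ∂μ2)| := by
    rw [← mul_sub, abs_mul, abs_of_nonneg (by positivity : (0:ℝ) ≤ D⁻¹)]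
    rw [← mul_assoc, mul_inv_cancel₀ (ne_of_gt hD0), one_mul]
  rw [hfinal]
  exact mul_le_mul_of_nonneg_left hle hD0.le
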